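/- Fix a finite nonempty vocabulary Σ and set X = List Σ. Let H be a finite nonempty set of functions X → X, let T ≥ 1, let f_1, …, f_T ∈ H, and let f_0 = f_T ∘ ⋯ ∘ f_2 ∘ f_1. Let D_0 be a probability distribution (PMF) over X, and for each t ∈ {1,…,T} suppose the simple-task input distribution D_t equals the pushforward of D_0 under f_{t−1} ∘ ⋯ ∘ f_1 (with D_1 = D_0), i.e., D_t is the law of z_t(x) for x ~ D_0, where z_1(x) = x and z_t(x) = f_{t−1} ∘ ⋯ ∘ f_1(x). Suppose for all f ≠ g in H and all t ∈ {1,…,T}, Pr_{x'~D_t}[f(x') ≠ g(x')] > ε_0 for some ε_0 > 0. For each t, draw k_t i.i.d. inputs from D_t labeled by f_t to form S_t, and independently draw k_c i.i.d. inputs from D_0 to form chain-of-thought composite examples with step-t pairs (z_t(x_i), z_{t+1}(x_i)). Let 0 < δ < 1 and suppose k_c + k_t ≥ (1/ε_0)·(ln|H| + ln(T/δ)) for every t ∈ {1,…,T}. Then with probability at least 1 − δ over all the datasets, for every t ∈ {1,…,T}, the only g ∈ H consistent with both S_t and the step-t pairs of the composite examples is g = f_t, and hence the composition of per-step consistent hypotheses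 equals f_0. -/

import Mathlib

/-- `compChain fs` is the composite function `f_T ∘ ⋯ ∘ f_2 ∘ f_1` where `f_{t+1} = fs t`
(i.e. `fs 0` is applied first). -/
def compChain {X : Type*} {T : ℕ} (fs : Fin T → (X → X)) (x : X) : X :=
  (List.ofFn fs).foldl (fun a g => g a) x

/-- `partialChain fs t x` is the intermediate value `z_{t+1}(x) = f_t ∘ ⋯ ∘ f_1 (x)`
of the chain of thought on input `x` (so `partialChain fs 0 x = x`). -/
def partialChain {X : Type*} {T : ℕ} (fs : Fin T → (X → X)) (t : ℕ) (x : X) : X :=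
  ((List.ofFn fs).take t).foldl (fun a g => g a) x

open scoped ENNReal


open scoped ENNReal

lemma tsum_pi_prod : ∀ {n : ℕ} (β : Fin n → Type u) (g : ∀ i, β i → ℝ≥0∞),
    ∑' f : ∀ i, β i, ∏ i, g i (f i) = ∏ i, ∑' b, g i b
  | 0, β, g => by
    haveI : Unique (∀ i : Fin 0, β i) := Pi.uniqueOfIsEmpty β
    rw [tsum_eq_single default (fun b hb => absurd (Unique.eq_default b) hb)]
    simp
  | (n+1), β, g => by
    rw [← (Fin.consEquiv β).tsum_eq, ENNReal.tsum_prod']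
    have : ∀ (a : β 0) (f : ∀ i : Fin n, β i.succ),
        ∏ i, g i ((Fin.consEquiv β) (a, f) i)
          = g 0 a * ∏ i : Fin n, g i.succ (f i) := by
      intro a f
      rw [Fin.prod_univ_succ]
      simp [Fin.consEquiv]
    simp only [this]
    rw [Fin.prod_univ_succ]
    calc ∑' a, ∑' f : ∀ i : Fin n, β i.succ, g 0 a * ∏ i, g i.succ (f i)
        = ∑' a : β 0, g 0 a * ∑' f : ∀ i : Fin n, β i.succ, ∏ i, g i.succ (f i) := by
          simp [ENNReal.tsum_mul_left]
      _ = (∑' a, g 0 a) * ∑' f : ∀ i : Fin n, β i.succ, ∏ i, g i.succ (f i) :=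
          ENNReal.tsum_mul_right
      _ = (∑' b, g 0 b) * ∏ i : Fin n, ∑' b, g i.succ b := by
          rw [tsum_pi_prod (fun i => β i.succ) (fun i => g i.succ)]

lemma tsum_W_prod {T : ℕ} {k : Fin T → ℕ} {kc : ℕ} {α : Type u}
    (F : (t : Fin T) → Fin (k t) → α → ℝ≥0∞) (G : Fin kc → α → ℝ≥0∞) :
    ∑' w : ((t : Fin T) → Fin (k t) → α) × (Fin kc → α),
      (∏ t, ∏ i, F t i (w.1 t i)) * ∏ i, G i (w.2 i)
    = (∏ t, ∏ i, ∑' x, F t i x) * ∏ i, ∑' x, G i x := by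
  rw [ENNReal.tsum_prod']
  calc ∑' a : (t : Fin T) → Fin (k t) → α, ∑' b : Fin kc → α,
        (∏ t, ∏ i, F t i (a t i)) * ∏ i, G i (b i)
      = (∑' a : (t : Fin T) → Fin (k t) → α, ∏ t, ∏ i, F t i (a t i))
          * ∑' b : Fin kc → α, ∏ i, G i (b i) := by
        simp only [ENNReal.tsum_mul_left]
        exact ENNReal.tsum_mul_right
    _ = (∏ t, ∏ i, ∑' x, F t i x) * ∏ i, ∑' x, G i x := by
        rw [tsum_pi_prod (fun t => Fin (k t) → α) (fun t f => ∏ i, F t i (f i)),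
          tsum_pi_prod (fun _ => α) G]
        congr 1
        exact Finset.prod_congr rfl fun t _ => tsum_pi_prod (fun _ => α) (F t)

lemma partialChain_succ {X : Type*} {T : ℕ} (fs : Fin T → (X → X)) (t : Fin T) (x : X) :
    partialChain fs ((t : ℕ) + 1) x = fs t (partialChain fs t x) := by
  unfold partialChain
  rw [List.take_succ, List.foldl_append]
  have h : (List.ofFn fs)[(t : ℕ)]? = some (fs t) := by
    simp [List.getElem?_ofFn, List.ofFnNthVal, t.isLt]
  rw [h]
  rfl


lemma event_bound {V : Type*} {T : ℕ} (k : Fin T → ℕ) (kc : ℕ)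
    (fs : Fin T → (List V → List V)) (D₀ : PMF (List V)) (D : Fin T → PMF (List V))
    (hD : ∀ t : Fin T, D t = D₀.map (partialChain fs t))
    (t : Fin T) (g : List V → List V) :
    (∑' w : ((s : Fin T) → Fin (k s) → List V) × (Fin kc → List V),
      Set.indicator {w : ((s : Fin T) → Fin (k s) → List V) × (Fin kc → List V) |
          (∀ i, g (w.1 t i) = fs t (w.1 t i)) ∧
          (∀ i, g (partialChain fs t (w.2 i)) = partialChain fs ((t:ℕ)+1) (w.2 i))}
        (fun w => (∏ s, ∏ i, D s (w.1 s i)) * ∏ i, D₀ (w.2 i)) w)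
    = ((D t).toOuterMeasure {x | g x = fs t x}) ^ (kc + k t) := by
  classical
  set q : ℝ≥0∞ := (D t).toOuterMeasure {x | g x = fs t x} with hq
  set F : (s : Fin T) → Fin (k s) → List V → ℝ≥0∞ :=
    fun s _ x => if s = t → g x = fs t x then D s x else 0 with hF
  set G : Fin kc → List V → ℝ≥0∞ :=
    fun _ x => if g (partialChain fs t x) = partialChain fs ((t:ℕ)+1) x then D₀ x else 0
    with hG
  set A : Set (((s : Fin T) → Fin (k s) → List V) × (Fin kc → List V)) :=
    {w : ((s : Fin T) → Fin (k s) → List V) × (Fin kc → List V) |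
          (∀ i, g (w.1 t i) = fs t (w.1 t i)) ∧
          (∀ i, g (partialChain fs t (w.2 i)) = partialChain fs ((t:ℕ)+1) (w.2 i))} with hAdef
  have hpt : ∀ w : ((s : Fin T) → Fin (k s) → List V) × (Fin kc → List V),
      Set.indicator A
        (fun w => (∏ s, ∏ i, D s (w.1 s i)) * ∏ i, D₀ (w.2 i)) w
      = (∏ s, ∏ i, F s i (w.1 s i)) * ∏ i, G i (w.2 i) := by
    intro w
    by_cases hw : w ∈ A
    · rw [Set.indicator_of_mem hw]
      obtain ⟨hw1, hw2⟩ : (∀ i, g (w.1 t i) = fs t (w.1 t i)) ∧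
        (∀ i, g (partialChain fs t (w.2 i)) = partialChain fs ((t:ℕ)+1) (w.2 i)) := hw
      congr 1
      · exact Finset.prod_congr rfl fun s _ => Finset.prod_congr rfl fun i _ =>
          (if_pos (fun hst => by subst hst; exact hw1 i)).symm
      · exact Finset.prod_congr rfl fun i _ => (if_pos (hw2 i)).symm
    · rw [Set.indicator_of_notMem hw]
      have hw' : ¬((∀ i, g (w.1 t i) = fs t (w.1 t i)) ∧
        (∀ i, g (partialChain fs t (w.2 i)) = partialChain fs ((t:ℕ)+1) (w.2 i))) := hw
      rcases not_and_or.mp hw' with h | h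
      · push_neg at h
        obtain ⟨i, hi⟩ := h
        have : F t i (w.1 t i) = 0 := if_neg (fun hc => hi (hc rfl))
        rw [Finset.prod_eq_zero (Finset.mem_univ t)
          (Finset.prod_eq_zero (Finset.mem_univ i) this), zero_mul]
      · push_neg at h
        obtain ⟨i, hi⟩ := h
        rw [Finset.prod_eq_zero (Finset.mem_univ i) (if_neg hi : G i (w.2 i) = 0), mul_zero]
  rw [tsum_congr hpt, tsum_W_prod]
  have hqind : q = ∑' x, Set.indicator {x | g x = fs t x} (D t) x :=
    (D t).toOuterMeasure_apply _
  have hFs : ∀ (s : Fin T) (i : Fin (k s)), (∑' x, F s i x) = if s = t then q else 1 := by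
    intro s i
    simp only [hF]
    by_cases hst : s = t
    · subst hst
      rw [if_pos rfl, hqind]
      refine tsum_congr fun x => ?_
      by_cases hx : g x = fs s x
      · rw [if_pos (fun _ => hx), Set.indicator_of_mem (show x ∈ {x | g x = fs s x} from hx)]
      · rw [if_neg (fun hc => hx (hc rfl)), Set.indicator_of_notMem (show x ∉ {x | g x = fs s x} from hx)]
    · rw [if_neg hst]
      have h2 : ∀ x, (if s = t → g x = fs t x then D s x else 0) = D s x :=
        fun x => if_pos (fun hc => absurd hc hst)
      rw [tsum_congr h2, (D s).tsum_coe]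
  have hGs : ∀ i : Fin kc, (∑' x, G i x) = q := by
    intro i
    have h1 : ∀ x, G i x = Set.indicator
        ((partialChain fs t) ⁻¹' {y | g y = fs t y}) D₀ x := by
      intro x
      have : (x ∈ (partialChain fs t) ⁻¹' {y | g y = fs t y}) ↔
          (g (partialChain fs t x) = partialChain fs ((t:ℕ)+1) x) := by
        simp [partialChain_succ fs t x]
      simp only [hG]
      by_cases hx : g (partialChain fs t x) = partialChain fs ((t:ℕ)+1) x
      · rw [if_pos hx, Set.indicator_of_mem (this.mpr hx)]
      · rw [if_neg hx, Set.indicator_of_notMem (fun hc => hx (this.mp hc))]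
    rw [tsum_congr h1, ← D₀.toOuterMeasure_apply, ← PMF.toOuterMeasure_map_apply, ← hD t]
  have hprodF : (∏ s, ∏ i, ∑' x, F s i x) = q ^ (k t) := by
    rw [Finset.prod_congr rfl (fun s _ => Finset.prod_congr rfl (fun i _ => hFs s i))]
    rw [Finset.prod_eq_single t (fun s _ hs => by simp [if_neg hs])
      (fun h => absurd (Finset.mem_univ t) h)]
    simp
  have hprodG : (∏ i : Fin kc, ∑' x, G i x) = q ^ kc := by
    rw [Finset.prod_congr rfl (fun i _ => hGs i)]
    simp
  rw [hprodF, hprodG, ← pow_add, add_comm (k t) kc]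


/-- Matched-distribution version of the chain-of-thought identification
result.  The step-`t` simple-task input distribution is the pushforward
`D t = D₀.map (z_t)` of the composite input distribution `D₀` under
`z_t = f_{t−1} ∘ ⋯ ∘ f_1` (so simple-task examples and the step-`t` pairs of the
composite chain-of-thought examples are i.i.d. from the same labeled distribution).
If `H` is `ε₀`-distinguishable under every `D t` and
`k_c + k_t ≥ (1/ε₀)(ln|H| + ln(T/δ))` for every `t`, then with probability at least
`1 − δ` over all datasets, for every step `t` the only `g ∈ H` consistent with both
the simple-task examples and the step-`t` pairs is `fs t`; consequently any composition
of per-step consistent hypotheses equals the target composition `f₀ = compChain fs`. -/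
theorem expcot_identification_matched {V : Type*} [Fintype V] [Nonempty V]
    (H : Finset (List V → List V)) (hH : H.Nonempty)
    (T : ℕ) (hT : 1 ≤ T) (fs : Fin T → (List V → List V)) (hfs : ∀ t, fs t ∈ H)
    (D₀ : PMF (List V)) (D : Fin T → PMF (List V))
    (hD : ∀ t : Fin T, D t = D₀.map (partialChain fs t))
    (ε₀ : ℝ) (hε₀ : 0 < ε₀)
    (hdist : ∀ f ∈ H, ∀ g ∈ H, f ≠ g → ∀ t : Fin T,
      ENNReal.ofReal ε₀ < (D t).toOuterMeasure {x | f x ≠ g x})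
    (k : Fin T → ℕ) (kc : ℕ) (δ : ℝ) (hδ0 : 0 < δ) (hδ1 : δ < 1)
    (hk : ∀ t : Fin T,
      (1 / ε₀) * (Real.log H.card + Real.log ((T : ℝ) / δ)) ≤ ((kc + k t : ℕ) : ℝ)) :
    1 - δ ≤
      (∑' w : ((t : Fin T) → Fin (k t) → List V) × (Fin kc → List V),
        Set.indicator
          {w : ((t : Fin T) → Fin (k t) → List V) × (Fin kc → List V) |
            (∀ t : Fin T, ∀ g ∈ H,
              ((∀ i, g (w.1 t i) = fs t (w.1 t i)) ∧
                (∀ i, g (partialChain fs t (w.2 i)) =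
                  partialChain fs ((t : ℕ) + 1) (w.2 i))) → g = fs t) ∧
            ∀ h : Fin T → (List V → List V),
              (∀ t : Fin T, h t ∈ H ∧
                (∀ i, h t (w.1 t i) = fs t (w.1 t i)) ∧
                (∀ i, h t (partialChain fs t (w.2 i)) =
                  partialChain fs ((t : ℕ) + 1) (w.2 i))) →
              compChain h = compChain fs}
          (fun w => (∏ t, ∏ i, D t (w.1 t i)) * ∏ i, D₀ (w.2 i)) w).toReal := by
  classical
  set p : ((t : Fin T) → Fin (k t) → List V) × (Fin kc → List V) → ℝ≥0∞ :=
    (fun w => (∏ t, ∏ i, D t (w.1 t i)) * ∏ i, D₀ (w.2 i)) with hp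
  set E : Set (((t : Fin T) → Fin (k t) → List V) × (Fin kc → List V)) :=
    {w : ((t : Fin T) → Fin (k t) → List V) × (Fin kc → List V) |
            (∀ t : Fin T, ∀ g ∈ H,
              ((∀ i, g (w.1 t i) = fs t (w.1 t i)) ∧
                (∀ i, g (partialChain fs t (w.2 i)) =
                  partialChain fs ((t : ℕ) + 1) (w.2 i))) → g = fs t) ∧
            ∀ h : Fin T → (List V → List V),
              (∀ t : Fin T, h t ∈ H ∧
                (∀ i, h t (w.1 t i) = fs t (w.1 t i)) ∧
                (∀ i, h t (partialChain fs t (w.2 i)) =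
                  partialChain fs ((t : ℕ) + 1) (w.2 i))) →
              compChain h = compChain fs} with hE
  -- basic positivity facts
  have hHpos : (0:ℝ) < H.card := by exact_mod_cast Finset.card_pos.mpr hH
  have hTpos : (0:ℝ) < T := by exact_mod_cast Nat.lt_of_lt_of_le Nat.zero_lt_one hT
  -- total mass is 1
  have htot : (∑' w : ((t : Fin T) → Fin (k t) → List V) × (Fin kc → List V), p w) = 1 := by
    rw [hp]
    have := tsum_W_prod (α := List V) (T := T) (k := k) (kc := kc)
      (fun t _ => ⇑(D t)) (fun _ => ⇑D₀)
    rw [this]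
    simp [PMF.tsum_coe]
  -- the per-step bad-event bound
  have key : ∀ (t : Fin T) (g : List V → List V), g ∈ H → g ≠ fs t →
      (∑' w : ((s : Fin T) → Fin (k s) → List V) × (Fin kc → List V),
        Set.indicator {w : ((s : Fin T) → Fin (k s) → List V) × (Fin kc → List V) |
          (∀ i, g (w.1 t i) = fs t (w.1 t i)) ∧
          (∀ i, g (partialChain fs t (w.2 i)) = partialChain fs ((t:ℕ)+1) (w.2 i))}
          p w) ≤ ENNReal.ofReal (δ / (T * H.card)) := by
    intro t g hg hne
    rw [hp]
    rw [event_bound k kc fs D₀ D hD t g]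
    set q : ℝ≥0∞ := (D t).toOuterMeasure {x | g x = fs t x} with hq
    set m : ℝ≥0∞ := (D t).toOuterMeasure {x | g x ≠ fs t x} with hmdef
    have hm : ENNReal.ofReal ε₀ < m := hdist g hg (fs t) (hfs t) hne t
    have hsum : q + m = 1 := by
      rw [hq, hmdef, PMF.toOuterMeasure_apply, PMF.toOuterMeasure_apply, ← ENNReal.tsum_add]
      have hpt : ∀ x, {x | g x = fs t x}.indicator (⇑(D t)) x
          + {x | g x ≠ fs t x}.indicator (⇑(D t)) x = D t x := by
        intro x
        have hcompl : {x | g x ≠ fs t x} = {x | g x = fs t x}ᶜ := rfl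
        rw [hcompl]
        exact congrFun (Set.indicator_self_add_compl {x | g x = fs t x} (⇑(D t))) x
      rw [tsum_congr hpt, (D t).tsum_coe]
    have hm1 : m ≤ 1 := by rw [← hsum]; exact le_add_self
    have hε₀lt1 : ε₀ < 1 := ENNReal.ofReal_lt_one.mp (hm.trans_le hm1)
    have hqle : q ≤ ENNReal.ofReal (1 - ε₀) := by
      rw [ENNReal.ofReal_sub _ hε₀.le, ENNReal.ofReal_one]
      have hle : q + ENNReal.ofReal ε₀ ≤ 1 := by
        rw [← hsum]; exact add_le_add_right hm.le q
      exact ENNReal.le_sub_of_add_le_right (by simp) hle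
    have hq' : q ^ (kc + k t) ≤ ENNReal.ofReal ((1 - ε₀) ^ (kc + k t)) := by
      rw [ENNReal.ofReal_pow (by linarith)]
      exact pow_le_pow_left₀ (zero_le (a := q)) hqle _
    refine hq'.trans (ENNReal.ofReal_le_ofReal ?_)
    -- real-number computation
    set n : ℕ := kc + k t with hn
    set L : ℝ := Real.log H.card + Real.log ((T : ℝ) / δ) with hL
    have h1 : L ≤ ε₀ * n := by
      have h := hk t
      rw [one_div, inv_mul_le_iff₀ hε₀] at h
      exact_mod_cast h
    have h2 : (1-ε₀)^n ≤ Real.exp (-ε₀) ^ n :=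
      pow_le_pow_left₀ (by linarith) (by linarith [Real.add_one_le_exp (-ε₀)]) n
    have h3 : Real.exp (-ε₀) ^ n = Real.exp (-(ε₀ * n)) := by
      rw [← Real.exp_nat_mul]; congr 1; ring
    have h4 : Real.exp (-(ε₀ * n)) ≤ Real.exp (-L) := Real.exp_le_exp.mpr (by linarith)
    have h5 : Real.exp (-L) = δ / (T * H.card) := by
      rw [show L = Real.log ((H.card : ℝ) * ((T : ℝ)/δ)) from
        (Real.log_mul (ne_of_gt hHpos) (by positivity)).symm]
      rw [Real.exp_neg, Real.exp_log (by positivity)]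
      rw [show (H.card:ℝ) * ((T:ℝ)/δ) = ((T:ℝ) * (H.card:ℝ))/δ from by ring, inv_div]
    linarith
  -- every bad sample point lies in one of the bad events
  have hEsub : ∀ w : ((t : Fin T) → Fin (k t) → List V) × (Fin kc → List V), w ∉ E →
      ∃ t : Fin T, ∃ g, g ∈ H ∧ g ≠ fs t ∧
        ((∀ i, g (w.1 t i) = fs t (w.1 t i)) ∧
          (∀ i, g (partialChain fs t (w.2 i)) = partialChain fs ((t:ℕ)+1) (w.2 i))) := by
    intro w hw
    by_cases hP : ∀ t : Fin T, ∀ g ∈ H,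
        ((∀ i, g (w.1 t i) = fs t (w.1 t i)) ∧
          (∀ i, g (partialChain fs t (w.2 i)) = partialChain fs ((t:ℕ)+1) (w.2 i))) → g = fs t
    · exfalso
      apply hw
      refine ⟨hP, ?_⟩
      intro h hh
      have hhfs : h = fs := funext fun t => hP t (h t) (hh t).1 ⟨(hh t).2.1, (hh t).2.2⟩
      rw [hhfs]
    · push_neg at hP
      obtain ⟨t, g, hg, hc, hne⟩ := hP
      exact ⟨t, g, hg, hne, hc⟩
  -- pointwise union bound
  have hptw : ∀ w : ((t : Fin T) → Fin (k t) → List V) × (Fin kc → List V),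
      p w ≤ E.indicator p w + ∑ t : Fin T, ∑ g ∈ H.erase (fs t),
        Set.indicator {w : ((s : Fin T) → Fin (k s) → List V) × (Fin kc → List V) |
          (∀ i, g (w.1 t i) = fs t (w.1 t i)) ∧
          (∀ i, g (partialChain fs t (w.2 i)) = partialChain fs ((t:ℕ)+1) (w.2 i))} p w := by
    intro w
    by_cases hw : w ∈ E
    · rw [Set.indicator_of_mem hw]
      exact le_self_add
    · obtain ⟨t, g, hg, hne, hA⟩ := hEsub w hw
      have h1 : p w ≤ ∑ g' ∈ H.erase (fs t),
          Set.indicator {w : ((s : Fin T) → Fin (k s) → List V) × (Fin kc → List V) |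
            (∀ i, g' (w.1 t i) = fs t (w.1 t i)) ∧
            (∀ i, g' (partialChain fs t (w.2 i)) = partialChain fs ((t:ℕ)+1) (w.2 i))} p w := by
        have hA' : w ∈ {w : ((s : Fin T) → Fin (k s) → List V) × (Fin kc → List V) |
              (∀ i, g (w.1 t i) = fs t (w.1 t i)) ∧
              (∀ i, g (partialChain fs t (w.2 i)) = partialChain fs ((t:ℕ)+1) (w.2 i))} := hA
        have heq : p w = Set.indicator
            {w : ((s : Fin T) → Fin (k s) → List V) × (Fin kc → List V) |
              (∀ i, g (w.1 t i) = fs t (w.1 t i)) ∧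
              (∀ i, g (partialChain fs t (w.2 i)) = partialChain fs ((t:ℕ)+1) (w.2 i))} p w :=
          (Set.indicator_of_mem hA' p).symm
        rw [heq]
        exact Finset.single_le_sum (f := fun g' => Set.indicator
            {w : ((s : Fin T) → Fin (k s) → List V) × (Fin kc → List V) |
              (∀ i, g' (w.1 t i) = fs t (w.1 t i)) ∧
              (∀ i, g' (partialChain fs t (w.2 i)) = partialChain fs ((t:ℕ)+1) (w.2 i))} p w)
          (fun _ _ => zero_le) (Finset.mem_erase.mpr ⟨hne, hg⟩)
      refine le_trans (h1.trans ?_) le_add_self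
      exact Finset.single_le_sum
        (f := fun t : Fin T => ∑ g ∈ H.erase (fs t),
          Set.indicator {w : ((s : Fin T) → Fin (k s) → List V) × (Fin kc → List V) |
            (∀ i, g (w.1 t i) = fs t (w.1 t i)) ∧
            (∀ i, g (partialChain fs t (w.2 i)) = partialChain fs ((t:ℕ)+1) (w.2 i))} p w)
        (fun _ _ => zero_le) (Finset.mem_univ t)
  -- sum the union bound
  have hbad : (∑' w : ((t : Fin T) → Fin (k t) → List V) × (Fin kc → List V),
      ∑ t : Fin T, ∑ g ∈ H.erase (fs t),
        Set.indicator {w : ((s : Fin T) → Fin (k s) → List V) × (Fin kc → List V) |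
          (∀ i, g (w.1 t i) = fs t (w.1 t i)) ∧
          (∀ i, g (partialChain fs t (w.2 i)) = partialChain fs ((t:ℕ)+1) (w.2 i))} p w)
      ≤ ENNReal.ofReal δ := by
    rw [Summable.tsum_finsetSum (fun _ _ => ENNReal.summable)]
    have hswap : ∀ t : Fin T, (∑' w : ((s : Fin T) → Fin (k s) → List V) × (Fin kc → List V),
        ∑ g ∈ H.erase (fs t),
          Set.indicator {w : ((s : Fin T) → Fin (k s) → List V) × (Fin kc → List V) |
            (∀ i, g (w.1 t i) = fs t (w.1 t i)) ∧
            (∀ i, g (partialChain fs t (w.2 i)) = partialChain fs ((t:ℕ)+1) (w.2 i))} p w)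
        ≤ (H.card : ℝ≥0∞) * ENNReal.ofReal (δ / (T * H.card)) := by
      intro t
      rw [Summable.tsum_finsetSum (fun _ _ => ENNReal.summable)]
      calc ∑ g ∈ H.erase (fs t), _ ≤ ∑ _g ∈ H.erase (fs t), ENNReal.ofReal (δ / (T * H.card)) :=
            Finset.sum_le_sum fun g hg => key t g (Finset.mem_of_mem_erase hg)
              (Finset.ne_of_mem_erase hg)
        _ = ((H.erase (fs t)).card : ℝ≥0∞) * ENNReal.ofReal (δ / (T * H.card)) := by
            rw [Finset.sum_const, nsmul_eq_mul]
        _ ≤ (H.card : ℝ≥0∞) * ENNReal.ofReal (δ / (T * H.card)) := by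
            exact mul_le_mul_left (by exact_mod_cast Finset.card_erase_le) _
    calc (∑ t : Fin T, _) ≤ ∑ _t : Fin T, (H.card : ℝ≥0∞) * ENNReal.ofReal (δ / (T * H.card)) :=
          Finset.sum_le_sum fun t _ => hswap t
      _ = (T : ℝ≥0∞) * ((H.card : ℝ≥0∞) * ENNReal.ofReal (δ / (T * H.card))) := by
          rw [Finset.sum_const, nsmul_eq_mul, Finset.card_univ, Fintype.card_fin]
      _ = ENNReal.ofReal ((T : ℝ) * ((H.card : ℝ) * (δ / (T * H.card)))) := by
          rw [ENNReal.ofReal_mul (by positivity), ENNReal.ofReal_mul (by positivity)]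
          rw [ENNReal.ofReal_natCast, ENNReal.ofReal_natCast]
      _ = ENNReal.ofReal δ := by
          congr 1
          rw [show (T:ℝ) * ((H.card:ℝ) * (δ / ((T:ℝ) * (H.card:ℝ))))
              = δ * (((T:ℝ) * (H.card:ℝ))/((T:ℝ) * (H.card:ℝ))) from by ring,
            div_self (by positivity), mul_one]
  -- combine
  have main : 1 ≤ (∑' w, E.indicator p w) + ENNReal.ofReal δ := by
    calc (1:ℝ≥0∞) = ∑' w, p w := htot.symm
      _ ≤ ∑' w : ((t : Fin T) → Fin (k t) → List V) × (Fin kc → List V),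
          (E.indicator p w + ∑ t : Fin T, ∑ g ∈ H.erase (fs t),
            Set.indicator {w : ((s : Fin T) → Fin (k s) → List V) × (Fin kc → List V) |
              (∀ i, g (w.1 t i) = fs t (w.1 t i)) ∧
              (∀ i, g (partialChain fs t (w.2 i)) = partialChain fs ((t:ℕ)+1) (w.2 i))} p w) :=
          ENNReal.tsum_le_tsum hptw
      _ = (∑' w, E.indicator p w) + ∑' w : ((t : Fin T) → Fin (k t) → List V) × (Fin kc → List V),
          ∑ t : Fin T, ∑ g ∈ H.erase (fs t),
            Set.indicator {w : ((s : Fin T) → Fin (k s) → List V) × (Fin kc → List V) |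
              (∀ i, g (w.1 t i) = fs t (w.1 t i)) ∧
              (∀ i, g (partialChain fs t (w.2 i)) = partialChain fs ((t:ℕ)+1) (w.2 i))} p w :=
          ENNReal.tsum_add
      _ ≤ (∑' w, E.indicator p w) + ENNReal.ofReal δ := add_le_add_right hbad _
  have hS1 : (∑' w, E.indicator p w) ≤ 1 :=
    le_trans (ENNReal.tsum_le_tsum fun w => Set.indicator_le_self _ _ w) htot.le
  have hfin : (∑' w, E.indicator p w) ≠ ⊤ := (hS1.trans_lt ENNReal.one_lt_top).ne
  have hge : 1 - ENNReal.ofReal δ ≤ ∑' w, E.indicator p w := tsub_le_iff_right.mpr main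
  have hmono := ENNReal.toReal_mono hfin hge
  rw [ENNReal.toReal_sub_of_le (ENNReal.ofReal_le_one.mpr hδ1.le) ENNReal.one_ne_top,
    ENNReal.toReal_one, ENNReal.toReal_ofReal hδ0.le] at hmono
  exact hmono
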